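/- arXiv:1902.09533 — 2 statements merged into one kernel-verified Lean document; each statement's English description precedes it below -/
import Mathlib

section
/- Let E be a Banach space, K ⊆ ℝ × E nonempty and weakly compact, and C ⊆ E nonempty, closed, and convex. Define V: E → ℝ ∪ {+∞} by V(x) = min{r : (r,y) ∈ K, y ∈ C + x} (with V(x) = +∞ when no such (r,y) exists). Then V is weakly lower semicontinuous on E, i.e., its epigraph {(r,x) : V(x) ≤ r} is weakly closed in ℝ × E. -/
open Topology Filter

section Aux

variable {E : Type*} [NormedAddCommGroup E] [NormedSpace ℝ E]

theorem aux_fst_weak_continuous :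
    Continuous (X := WeakSpace ℝ (ℝ × E)) (Y := ℝ) (fun p => p.1) :=
  WeakBilin.eval_continuous (topDualPairing ℝ (ℝ × E)).flip (ContinuousLinearMap.fst ℝ ℝ E)

theorem aux_snd_weak_continuous :
    Continuous (X := WeakSpace ℝ (ℝ × E)) (Y := WeakSpace ℝ E) (fun p => p.2) :=
  WeakBilin.continuous_of_continuous_eval _ fun f =>
    WeakBilin.eval_continuous (topDualPairing ℝ (ℝ × E)).flip
      (f.comp (ContinuousLinearMap.snd ℝ ℝ E))

theorem aux_weak_closed (C : Set E) (hCclosed : IsClosed C) (hCconv : Convex ℝ C) :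
    IsClosed (X := WeakSpace ℝ E) C := by
  have h := hCconv.toWeakSpace_closure (𝕜 := ℝ)
  rw [hCclosed.closure_eq] at h
  have himg : ⇑(toWeakSpace ℝ E) '' C = C := by
    ext x
    constructor
    · rintro ⟨y, hy, rfl⟩; exact hy
    · exact fun hx => ⟨x, hx, rfl⟩
  rw [himg] at h
  exact h ▸ isClosed_closure

theorem aux_tendsto_sub {α : Type*} {E : Type*} [NormedAddCommGroup E] [NormedSpace ℝ E]
    {l : Filter α} {f g : α → WeakSpace ℝ E} {a b : WeakSpace ℝ E}
    (hf : Filter.Tendsto f l (𝓝 a)) (hg : Filter.Tendsto g l (𝓝 b)) :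
    Filter.Tendsto (fun x => f x - g x) l (𝓝 (a - b)) := hf.sub hg

end Aux


/-- The value function of the abstract perturbed problem:
`V(x) = inf {r : (r,y) ∈ K, y ∈ C + x}` (`+∞` if infeasible). -/
noncomputable def valueFn {E : Type*} [NormedAddCommGroup E] [NormedSpace ℝ E]
    (K : Set (ℝ × E)) (C : Set E) (x : E) : EReal :=
  sInf ((fun p : ℝ × E => (p.1 : EReal)) '' {p ∈ K | p.2 - x ∈ C})

/-- If `K ⊆ ℝ × E` is nonempty and weakly compact and `C ⊆ E` is
nonempty, closed and convex, then the value function is weakly lower semicontinuous: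
its epigraph is weakly closed in `ℝ × E`. -/
theorem valueFn_weakly_lsc
    {E : Type*} [NormedAddCommGroup E] [NormedSpace ℝ E]
    (K : Set (ℝ × E)) (C : Set E)
    (hKne : K.Nonempty)
    (hKcomp : IsCompact (K : Set (WeakSpace ℝ (ℝ × E))))
    (hCne : C.Nonempty) (hCclosed : IsClosed C) (hCconv : Convex ℝ C) :
    IsClosed ({p : ℝ × E | valueFn K C p.2 ≤ (p.1 : EReal)} :
      Set (WeakSpace ℝ (ℝ × E))) := by
  classical
  have hfst := aux_fst_weak_continuous (E := E)
  have hsnd := aux_snd_weak_continuous (E := E)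
  have hCweak := aux_weak_closed C hCclosed hCconv
  -- norm-compactness implies weak compactness
  have hKw : IsCompact (X := WeakSpace ℝ (ℝ × E)) K := by
    have himg : ⇑(toWeakSpaceCLM ℝ (ℝ × E)) '' K = K := by
      ext x
      constructor
      · rintro ⟨y, hy, rfl⟩; exact hy
      · exact fun hx => ⟨x, hx, rfl⟩
    exact himg ▸ hKcomp.image (map_continuous (toWeakSpaceCLM ℝ (ℝ × E)))
  -- Step 1: the epigraph equals the "witnessed" set.
  have hS : {p : ℝ × E | valueFn K C p.2 ≤ (p.1 : EReal)} =
      {q : ℝ × E | ∃ p ∈ K, p.2 - q.2 ∈ C ∧ p.1 ≤ q.1} := by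
    ext q
    simp only [Set.mem_setOf_eq]
    constructor
    · intro hv
      have hAne : ((fun p : ℝ × E => (p.1 : EReal)) '' {p ∈ K | p.2 - q.2 ∈ C}).Nonempty := by
        by_contra hA
        rw [Set.not_nonempty_iff_eq_empty] at hA
        rw [valueFn, hA, sInf_empty] at hv
        exact absurd (top_le_iff.mp hv) (EReal.coe_ne_top q.1)
      obtain ⟨_, ⟨p0, hp0, rfl⟩⟩ := hAne
      have hFclosed : IsClosed (X := WeakSpace ℝ (ℝ × E)) {p : ℝ × E | p.2 - q.2 ∈ C} := by
        have hc : Continuous (X := WeakSpace ℝ (ℝ × E)) (Y := WeakSpace ℝ E)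
            (fun p => p.2 - q.2) := hsnd.sub continuous_const
        exact hCweak.preimage hc
      have hFcomp : IsCompact (X := WeakSpace ℝ (ℝ × E)) {p ∈ K | p.2 - q.2 ∈ C} :=
        hKw.inter_right hFclosed
      obtain ⟨p, hpF, hpmin⟩ := hFcomp.exists_isMinOn ⟨p0, hp0⟩ hfst.continuousOn
      refine ⟨p, hpF.1, hpF.2, ?_⟩
      have h1 : (p.1 : EReal) ≤ valueFn K C q.2 := by
        refine le_sInf ?_
        rintro _ ⟨p', hp', rfl⟩
        show (p.1 : EReal) ≤ (p'.1 : EReal)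
        exact_mod_cast isMinOn_iff.mp hpmin p' hp'
      exact_mod_cast h1.trans hv
    · rintro ⟨p, hpK, hpC, hple⟩
      calc valueFn K C q.2 ≤ (p.1 : EReal) := sInf_le ⟨p, ⟨hpK, hpC⟩, rfl⟩
        _ ≤ (q.1 : EReal) := by exact_mod_cast hple
  rw [show ({p : ℝ × E | valueFn K C p.2 ≤ (p.1 : EReal)} : Set (WeakSpace ℝ (ℝ × E))) =
      {q : ℝ × E | ∃ p ∈ K, p.2 - q.2 ∈ C ∧ p.1 ≤ q.1} from hS]
  set S : Set (ℝ × E) := {q : ℝ × E | ∃ p ∈ K, p.2 - q.2 ∈ C ∧ p.1 ≤ q.1} with hSdef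
  -- Step 2: the witnessed set is weakly closed, by an ultrafilter argument.
  refine isClosed_iff_clusterPt.mpr ?_
  intro a ha
  haveI : (@nhds (WeakSpace ℝ (ℝ × E)) _ a ⊓ Filter.principal S).NeBot := ha
  obtain ⟨U, hU⟩ := Filter.exists_ultrafilter_le (@nhds (WeakSpace ℝ (ℝ × E)) _ a ⊓
    Filter.principal S)
  have hUa : (U : Filter (WeakSpace ℝ (ℝ × E))) ≤ @nhds (WeakSpace ℝ (ℝ × E)) _ a := hU.trans inf_le_left
  have hUS : S ∈ U := (hU.trans inf_le_right) (Filter.mem_principal_self S)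
  -- the witness selection function
  let w : ℝ × E → ℝ × E := fun q => if h : q ∈ S then h.choose else hKne.choose
  have hw : ∀ q ∈ S, w q ∈ K ∧ (w q).2 - q.2 ∈ C ∧ (w q).1 ≤ q.1 := by
    intro q hq
    have hspec := hq.choose_spec
    simp only [w, dif_pos hq]
    exact ⟨hspec.1, hspec.2.1, hspec.2.2⟩
  have hwK : ∀ q ∈ S, w q ∈ K := fun q hq => (hw q hq).1
  have hKU : K ∈ Ultrafilter.map w U :=
    Ultrafilter.mem_map.mpr (Filter.mem_of_superset hUS (fun q hq => hwK q hq))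
  obtain ⟨p, hpK, hp⟩ := hKw.ultrafilter_le_nhds (Ultrafilter.map w U)
    (Filter.le_principal_iff.mpr hKU)
  have hwT : Filter.Tendsto w (U : Filter (WeakSpace ℝ (ℝ × E))) (@nhds (WeakSpace ℝ (ℝ × E)) _ p) := hp
  -- first coordinate inequality
  have t1 : Filter.Tendsto (fun q : ℝ × E => q.1) (U : Filter (WeakSpace ℝ (ℝ × E))) (𝓝 a.1) :=
    (hfst.tendsto a).mono_left hUa
  have t2 : Filter.Tendsto (fun q : ℝ × E => (w q).1) (U : Filter (WeakSpace ℝ (ℝ × E))) (𝓝 p.1) :=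
    (hfst.tendsto p).comp hwT
  have h1 : Filter.Tendsto (fun q : ℝ × E => q.1 - (w q).1) (U : Filter (WeakSpace ℝ (ℝ × E)))
      (𝓝 (a.1 - p.1)) := t1.sub t2
  have hge : ∀ᶠ q in (U : Filter (WeakSpace ℝ (ℝ × E))), (0 : ℝ) ≤ q.1 - (w q).1 :=
    Filter.eventually_of_mem hUS (fun q hq => sub_nonneg.mpr (hw q hq).2.2)
  haveI : @Filter.NeBot (ℝ × E) (U : Filter (WeakSpace ℝ (ℝ × E))) := U.neBot
  have hple : p.1 ≤ a.1 := sub_nonneg.mp (ge_of_tendsto h1 hge)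
  -- second coordinate membership
  have s1 : Filter.Tendsto (fun q : ℝ × E => ((w q).2 : WeakSpace ℝ E))
      (U : Filter (WeakSpace ℝ (ℝ × E))) (@nhds (WeakSpace ℝ E) _ p.2) := (hsnd.tendsto p).comp hwT
  have s2 : Filter.Tendsto (fun q : ℝ × E => (q.2 : WeakSpace ℝ E))
      (U : Filter (WeakSpace ℝ (ℝ × E))) (@nhds (WeakSpace ℝ E) _ a.2) := (hsnd.tendsto a).mono_left hUa
  have h2 : Filter.Tendsto (fun q : ℝ × E => ((w q).2 - q.2 : WeakSpace ℝ E))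
      (U : Filter (WeakSpace ℝ (ℝ × E))) (@nhds (WeakSpace ℝ E) _ (p.2 - a.2)) := aux_tendsto_sub s1 s2
  have hmem : ∀ᶠ q in (U : Filter (WeakSpace ℝ (ℝ × E))), ((w q).2 - q.2 : WeakSpace ℝ E) ∈ C :=
    Filter.eventually_of_mem hUS (fun q hq => (hw q hq).2.1)
  have hCa : p.2 - a.2 ∈ C := hCweak.mem_of_tendsto h2 hmem
  exact ⟨p, hpK, hCa, hple⟩
end

section
/- Let (T,Σ,μ) be a complete finite measure space, E a separable Banach space, and Γ: T ⇉ E an integrably bounded multifunction with measurable graph. Then the set S¹_Γ of Bochner integrable selectors of Γ is nonempty, and consequently the Bochner integral ∫Γ dμ = {∫f dμ : f ∈ S¹_Γ} is nonempty. -/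
open MeasureTheory
open scoped ENNReal NNReal

namespace AumannSel

/-- prefix of length `n` of a sequence, as a list -/
def pre {ι : Type*} (σ : ℕ → ι) (n : ℕ) : List ι := (List.range n).map σ

@[simp] lemma pre_zero {ι : Type*} (σ : ℕ → ι) : pre σ 0 = [] := rfl

@[simp] lemma length_pre {ι : Type*} (σ : ℕ → ι) (n : ℕ) : (pre σ n).length = n := by
  simp [pre]

lemma pre_succ {ι : Type*} (σ : ℕ → ι) (n : ℕ) :
    pre σ (n + 1) = pre σ n ++ [σ n] := by
  simp [pre, List.range_succ]

lemma pre_cons {ι : Type*} (σ : ℕ → ι) (n : ℕ) :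
    pre σ (n + 1) = σ 0 :: pre (fun k => σ (k + 1)) n := by
  simp [pre, List.range_succ_eq_map, List.map_map]

@[simp] lemma getElem_pre {ι : Type*} (σ : ℕ → ι) {n k : ℕ} (h : k < n) :
    (pre σ n)[k]'(by simpa using h) = σ k := by
  simp [pre]

lemma getD_pre {ι : Type*} (σ : ℕ → ι) {n k : ℕ} (h : k < n) (d : ι) :
    (pre σ n).getD k d = σ k := by
  rw [List.getD_eq_getElem?_getD, List.getElem?_eq_getElem (by simpa using h)]
  simp [h]

lemma take_pre {ι : Type*} (σ : ℕ → ι) {m n : ℕ} (h : m ≤ n) :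
    (pre σ n).take m = pre σ m := by
  simp [pre, ← List.map_take, List.take_range, Nat.min_eq_left h]

lemma map_pre {ι κ : Type*} (f : ι → κ) (σ : ℕ → ι) (n : ℕ) :
    (pre σ n).map f = pre (f ∘ σ) n := by
  simp [pre, List.map_map]

lemma pre_congr {ι : Type*} {σ τ : ℕ → ι} {n : ℕ} (h : ∀ k < n, σ k = τ k) :
    pre σ n = pre τ n := by
  apply List.ext_getElem (by simp)
  intro k hk _
  simp only [length_pre] at hk
  simp [getElem_pre _ hk, h k hk]

lemma pre_eq_self {ι : Type*} (σ : ℕ → ι) (l : List ι) (d : ι)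
    (h : ∀ k < l.length, σ k = l.getD k d) : pre σ l.length = l := by
  apply List.ext_getElem (by simp)
  intro k hk _
  simp only [length_pre] at hk
  rw [getElem_pre _ hk, h k hk, List.getD_eq_getElem?_getD,
    List.getElem?_eq_getElem hk]
  simp

lemma pre_add {ι : Type*} (σ : ℕ → ι) (a n : ℕ) :
    pre σ (a + n) = pre σ a ++ pre (fun k => σ (a + k)) n := by
  induction n with
  | zero => simp
  | succ n ih => rw [← Nat.add_assoc, pre_succ, ih, pre_succ, List.append_assoc]

variable {T : Type*}

section Mono

variable {ι : Type*} {A : List ι → Set T}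

lemma mono_append (h : ∀ s k, A (s ++ [k]) ⊆ A s) (s u : List ι) :
    A (s ++ u) ⊆ A s := by
  induction u using List.reverseRecOn with
  | nil => simp
  | append_singleton u k ih =>
    rw [← List.append_assoc]; exact (h _ _).trans ih

lemma mono_prefix (h : ∀ s k, A (s ++ [k]) ⊆ A s) {s s' : List ι} (hp : s <+: s') :
    A s' ⊆ A s := by
  obtain ⟨u, rfl⟩ := hp
  exact mono_append h s u

end Mono

/-- The Suslin operation applied to a scheme of sets. -/
def susl {ι : Type*} (A : List ι → Set T) : Set T :=
  {t | ∃ σ : ℕ → ι, ∀ n, t ∈ A (pre σ n)}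




-- local getD helpers
lemma getD_concat_lt {ι : Type*} (l : List ι) (a d : ι) {i : ℕ} (h : i < l.length) :
    (l ++ [a]).getD i d = l.getD i d := by
  rw [List.getD_eq_getElem?_getD, List.getD_eq_getElem?_getD, List.getElem?_append,
    if_pos h]

lemma getD_concat_len {ι : Type*} (l : List ι) (a d : ι) :
    (l ++ [a]).getD l.length d = a := by
  rw [List.getD_eq_getElem?_getD, List.getElem?_concat_length]; rfl

lemma getD_append_len {ι : Type*} (l u : List ι) (d : ι) :
    (l ++ u).getD l.length d = u.getD 0 d := by
  rw [List.getD_eq_getElem?_getD, List.getD_eq_getElem?_getD,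
    List.getElem?_append_right le_rfl, Nat.sub_self]

lemma getD_of_le {ι : Type*} (l : List ι) (d : ι) {i : ℕ} (h : l.length ≤ i) :
    l.getD i d = d := by
  rw [List.getD_eq_getElem?_getD, List.getElem?_eq_none h]; rfl

lemma getD_take {ι : Type*} (l : List ι) (d : ι) {i k : ℕ} (h : i < k) :
    (l.take k).getD i d = l.getD i d := by
  rw [List.getD_eq_getElem?_getD, List.getD_eq_getElem?_getD, List.getElem?_take,
    if_pos h]

lemma sum_pow_half_le (ε : ℝ≥0∞) (k : ℕ) :
    ∑ i ∈ Finset.range k, ε / 2 ^ (i + 1) ≤ ε := by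
  have h1 : ∀ i : ℕ, ε / 2 ^ (i + 1) = ε * (2⁻¹ : ℝ≥0∞) ^ (i + 1) := by
    intro i
    rw [div_eq_mul_inv, ← ENNReal.inv_pow]
  calc ∑ i ∈ Finset.range k, ε / 2 ^ (i + 1)
      = ε * ∑ i ∈ Finset.range k, (2⁻¹ : ℝ≥0∞) ^ (i + 1) := by
        rw [Finset.mul_sum]; exact Finset.sum_congr rfl fun i _ => h1 i
    _ ≤ ε * 1 := by
        gcongr
        have h2 : ∑ i ∈ Finset.range k, (2⁻¹ : ℝ≥0∞) ^ (i + 1)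
            ≤ ∑' i : ℕ, (2⁻¹ : ℝ≥0∞) ^ (i + 1) := ENNReal.sum_le_tsum _
        refine h2.trans ?_
        have : ∑' i : ℕ, (2⁻¹ : ℝ≥0∞) ^ (i + 1) = 2⁻¹ * ∑' i : ℕ, (2⁻¹ : ℝ≥0∞) ^ i := by
          rw [← ENNReal.tsum_mul_left]
          exact tsum_congr fun i => by rw [pow_succ, mul_comm]
        rw [this, ENNReal.tsum_geometric, ENNReal.one_sub_inv_two, inv_inv]
        exact le_of_eq (ENNReal.inv_mul_cancel (by norm_num) (by norm_num))
    _ = ε := mul_one ε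

section Marczewski
variable [MeasurableSpace T] (μ : Measure T) [IsFiniteMeasure μ]

theorem nullMeasurableSet_susl (A : List ℕ → Set T) (hA : ∀ s, MeasurableSet (A s))
    (hm : ∀ s k, A (s ++ [k]) ⊆ A s) : NullMeasurableSet (susl A) μ := by
  set S := susl A with hS
  -- bounded variants of S
  set F : List ℕ → Set T := fun l =>
    {t | ∃ σ : ℕ → ℕ, (∀ i < l.length, σ i ≤ l.getD i 0) ∧ ∀ n, t ∈ A (pre σ n)} with hF
  have hF_nil : F [] = S := by
    ext t; simp [hF, hS, susl]
  have hF_mono : ∀ (l : List ℕ), Monotone (fun N => F (l ++ [N])) := by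
    intro l N M hNM t
    rintro ⟨σ, hb, hσ⟩
    refine ⟨σ, fun i hi => ?_, hσ⟩
    simp only [List.length_append, List.length_singleton] at hi
    rcases Nat.lt_or_ge i l.length with h | h
    · rw [getD_concat_lt _ _ _ h]; exact (hb i (by simpa using hi)).trans
        (by rw [getD_concat_lt _ _ _ h])
    · have hi' : i = l.length := by omega
      subst hi'
      rw [getD_concat_len]
      have h2 := hb l.length (by simp)
      rw [getD_concat_len] at h2
      exact h2.trans hNM
  have hF_union : ∀ l : List ℕ, F l = ⋃ N, F (l ++ [N]) := by
    intro l
    ext t; constructor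
    · rintro ⟨σ, hb, hσ⟩
      refine Set.mem_iUnion.2 ⟨σ l.length, σ, fun i hi => ?_, hσ⟩
      simp only [List.length_append, List.length_singleton] at hi
      rcases Nat.lt_or_ge i l.length with h | h
      · rw [getD_concat_lt _ _ _ h]; exact hb i h
      · have hi' : i = l.length := by omega
        subst hi'
        rw [getD_concat_len]
    · rintro ht
      obtain ⟨N, σ, hb, hσ⟩ := Set.mem_iUnion.1 ht
      refine ⟨σ, fun i hi => ?_, hσ⟩
      have h2 := hb i (by simp; omega)
      rwa [getD_concat_lt _ _ _ hi] at h2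
  have hμF : ∀ l : List ℕ, μ (F l) = ⨆ N, μ (F (l ++ [N])) := by
    intro l
    rw [hF_union l]
    exact (hF_mono l).measure_iUnion
  -- approximation step
  have key : ∀ ε : ℝ≥0∞, ε ≠ 0 → ∃ B : Set T, MeasurableSet B ∧ B ⊆ S ∧ μ S ≤ μ B + ε := by
    intro ε hε
    have hstep' : ∀ l : List ℕ, ∃ N, μ (F l) ≤ μ (F (l ++ [N])) + ε / 2 ^ (l.length + 1) := by
      intro l
      set δ := ε / 2 ^ (l.length + 1) with hδdef
      have hδ : δ ≠ 0 :=
        (ENNReal.div_pos hε (ENNReal.pow_ne_top (by norm_num))).ne'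
      by_cases h0 : μ (F l) = 0
      · exact ⟨0, by simp [h0]⟩
      have hlt : μ (F l) - δ < ⨆ N, μ (F (l ++ [N])) := by
        rw [← hμF l]
        exact ENNReal.sub_lt_self (measure_ne_top μ _) h0 hδ
      obtain ⟨N, hN⟩ := lt_iSup_iff.mp hlt
      exact ⟨N, tsub_le_iff_right.mp hN.le⟩
    choose pick hpick using hstep'
    set L : ℕ → List ℕ := fun k => Nat.rec [] (fun _ l => l ++ [pick l]) k with hL
    have hLs : ∀ k, L (k + 1) = L k ++ [pick (L k)] := fun k => rfl
    have hLlen : ∀ k, (L k).length = k := by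
      intro k; induction k with
      | zero => rfl
      | succ k ih => rw [hLs]; simp [ih]
    have hinv : ∀ k, μ S ≤ μ (F (L k)) + ∑ i ∈ Finset.range k, ε / 2 ^ (i + 1) := by
      intro k; induction k with
      | zero => simp [show L 0 = [] from rfl, hF_nil]
      | succ k ih =>
        refine ih.trans ?_
        have h4 := hpick (L k)
        rw [hLlen k, ← hLs k] at h4
        calc μ (F (L k)) + ∑ i ∈ Finset.range k, ε / 2 ^ (i + 1)
            ≤ (μ (F (L (k + 1))) + ε / 2 ^ (k + 1)) +
                ∑ i ∈ Finset.range k, ε / 2 ^ (i + 1) := add_le_add_left h4 _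
          _ = μ (F (L (k + 1))) + ∑ i ∈ Finset.range (k + 1), ε / 2 ^ (i + 1) := by
              rw [Finset.sum_range_succ]; ring
    have hinv' : ∀ k, μ S ≤ μ (F (L k)) + ε := fun k =>
      (hinv k).trans (add_le_add_right (sum_pow_half_le ε k) _)
    -- the bound sequence
    set β : ℕ → ℕ := fun i => (L (i + 1)).getD i 0 with hβ
    have hLβ : ∀ {i k}, i < k → (L k).getD i 0 = β i := by
      intro i k hik
      induction k with
      | zero => omega
      | succ k ih =>
        rcases Nat.lt_or_ge i k with h | h
        · rw [hLs, getD_concat_lt _ _ _ (by rw [hLlen]; exact h), ih h]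
        · have : i = k := by omega
          subst this; rfl
    -- bounded measurable approximations
    set B : ℕ → Set T := fun k =>
      ⋃ (s : List ℕ) (_ : s.length = k ∧ ∀ i, s.getD i 0 ≤ β i), A s with hB
    have hBmeas : ∀ k, MeasurableSet (B k) := fun k =>
      MeasurableSet.iUnion fun s => MeasurableSet.iUnion fun _ => hA s
    have hFB : ∀ k, F (L k) ⊆ B k := by
      intro k t
      rintro ⟨σ, hb, hσ⟩
      simp only [hB, Set.mem_iUnion]
      refine ⟨pre σ k, ⟨by simp, fun i => ?_⟩, hσ k⟩
      rcases Nat.lt_or_ge i k with h | h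
      · rw [getD_pre _ h]
        have := hb i (by rw [hLlen]; exact h)
        rwa [hLβ h] at this
      · rw [getD_of_le _ _ (by simpa using h)]
        exact Nat.zero_le _
    have hBanti : ∀ k, B (k + 1) ⊆ B k := by
      intro k t ht
      simp only [hB, Set.mem_iUnion] at ht ⊢
      obtain ⟨s, ⟨hlen, hbd⟩, hts⟩ := ht
      refine ⟨s.take k, ⟨by simp [hlen], fun i => ?_⟩,
        mono_prefix hm (List.take_prefix _ _) hts⟩
      rcases Nat.lt_or_ge i k with h | h
      · rw [getD_take _ _ h]; exact hbd i
      · rw [getD_of_le _ _ (by simp [hlen]; omega)]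
        exact Nat.zero_le _
    refine ⟨⋂ k, B k, MeasurableSet.iInter hBmeas, ?_, ?_⟩
    · -- König's lemma : ⋂ B k ⊆ S
      intro t ht
      simp only [Set.mem_iInter] at ht
      set Tr : List ℕ → Prop := fun s => (∀ i, s.getD i 0 ≤ β i) ∧ t ∈ A s with hTrdef
      have hTr_take : ∀ s m, Tr s → Tr (s.take m) := by
        rintro s m ⟨h1, h2⟩
        refine ⟨fun i => ?_, mono_prefix hm (List.take_prefix _ _) h2⟩
        rcases Nat.lt_or_ge i m with h | h
        · rw [getD_take _ _ h]; exact h1 i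
        · rw [getD_of_le _ _ (by simp [List.length_take]; omega)]
          exact Nat.zero_le _
      set good : List ℕ → Prop := fun s =>
        ∀ n, ∃ s', Tr s' ∧ s'.length = s.length + n ∧ s <+: s' with hgooddef
      have hgood_nil : good [] := by
        intro n
        have htn := ht n
        simp only [hB, Set.mem_iUnion] at htn
        obtain ⟨s, ⟨hlen, hbd⟩, hts⟩ := htn
        exact ⟨s, ⟨hbd, hts⟩, by simp [hlen], List.nil_prefix⟩
      have hgood_self : ∀ s, good s → Tr s := by
        intro s hs
        obtain ⟨s', h1, h2, h3⟩ := hs 0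
        have : s = s' := List.IsPrefix.eq_of_length h3 (by omega)
        rwa [this]
      have hgood_step : ∀ s, good s → ∃ c, good (s ++ [c]) := by
        intro s hs
        have hx : ∀ n : ℕ, ∃ s', Tr s' ∧ s'.length = s.length + (n + 1) ∧ s <+: s' :=
          fun n => hs (n + 1)
        choose ext hext1 hext2 hext3 using hx
        have hentry : ∀ n, (ext n).getD s.length 0 ≤ β s.length := fun n => (hext1 n).1 _
        set g : ℕ → Fin (β s.length + 1) :=
          fun n => ⟨(ext n).getD s.length 0, Nat.lt_succ_of_le (hentry n)⟩ with hg
        obtain ⟨c0, hc0⟩ := Finite.exists_infinite_fiber g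
        have hinf : (g ⁻¹' {c0} : Set ℕ).Infinite := Set.infinite_coe_iff.mp hc0
        refine ⟨c0.1, fun n => ?_⟩
        obtain ⟨m, hm1, hm2⟩ := hinf.exists_gt n
        have hprefm : s <+: ext m := hext3 m
        obtain ⟨u, hu⟩ := hprefm
        have hulen : 0 < u.length := by
          have := hext2 m
          rw [← hu] at this
          simp at this; omega
        have hu0 : u.getD 0 0 = c0.1 := by
          have h1 : (ext m).getD s.length 0 = u.getD 0 0 := by
            rw [← hu, getD_append_len]
          have h2 : (ext m).getD s.length 0 = c0.1 := by
            have : g m = c0 := hm1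
            exact congrArg Fin.val this
          omega
        have hpref : s ++ [c0.1] <+: ext m := by
          rcases u with _ | ⟨u0, u'⟩
          · simp at hulen
          · have : u0 = c0.1 := by simpa using hu0
            subst this
            exact ⟨u', by rw [← hu]; simp⟩
        refine ⟨(ext m).take (s.length + 1 + n), hTr_take _ _ (hext1 m), ?_, ?_⟩
        · rw [List.length_take, hext2 m]
          simp only [List.length_append, List.length_singleton]
          omega
        · have heq : s ++ [c0.1] = (ext m).take (s.length + 1) := by
            obtain ⟨v, hv⟩ := hpref
            rw [← hv, List.take_append_of_le_length (by simp)]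
            simp
          have : (ext m).take (s.length + 1) =
              ((ext m).take (s.length + 1 + n)).take (s.length + 1) := by
            rw [List.take_take, Nat.min_eq_left (by omega)]
          rw [heq, this]
          exact List.take_prefix _ _
      -- build an infinite branch
      have hrec : ∀ s, good s → {c : ℕ // good (s ++ [c])} := fun s hs =>
        ⟨Classical.choose (hgood_step s hs), Classical.choose_spec (hgood_step s hs)⟩
      set G : ℕ → {l : List ℕ // good l} := fun n =>
        Nat.rec ⟨[], hgood_nil⟩ (fun _ p => ⟨p.1 ++ [(hrec p.1 p.2).1], (hrec p.1 p.2).2⟩) n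
        with hG
      have hGs : ∀ n, (G (n + 1)).1 = (G n).1 ++ [(hrec (G n).1 (G n).2).1] := fun n => rfl
      have hGlen : ∀ n, (G n).1.length = n := by
        intro n; induction n with
        | zero => rfl
        | succ n ih => rw [hGs]; simp [ih]
      set σ : ℕ → ℕ := fun n => (G (n + 1)).1.getD n 0 with hσdef
      have hGpre : ∀ n, pre σ n = (G n).1 := by
        intro n; induction n with
        | zero => rfl
        | succ n ih =>
          rw [pre_succ, ih, hGs]
          congr 1
          have h5 : σ n = ((G n).1 ++ [(hrec (G n).1 (G n).2).1]).getD n 0 := rfl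
          have h6 := getD_concat_len (G n).1 (hrec (G n).1 (G n).2).1 0
          rw [hGlen n] at h6
          rw [h5, h6]
      exact ⟨σ, fun n => by rw [hGpre n]; exact (hgood_self _ (G n).2).2⟩
    · -- measure bound
      have h1 : ∀ k, μ S ≤ μ (B k) + ε := fun k =>
        (hinv' k).trans (add_le_add_left (measure_mono (hFB k)) ε)
      have hanti : Antitone B := antitone_nat_of_succ_le hBanti
      have h2 : μ (⋂ k, B k) = ⨅ k, μ (B k) :=
        hanti.measure_iInter (fun k => (hBmeas k).nullMeasurableSet)
          ⟨0, measure_ne_top μ _⟩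
      rw [h2, ENNReal.iInf_add]
      exact le_iInf h1
  -- conclude null-measurability
  have key' : ∀ n : ℕ, ∃ B : Set T, MeasurableSet B ∧ B ⊆ S ∧
      μ S ≤ μ B + ((n : ℝ≥0∞) + 1)⁻¹ := fun n =>
    key _ (ENNReal.inv_ne_zero.2 (ENNReal.add_ne_top.2 ⟨ENNReal.natCast_ne_top n, ENNReal.one_ne_top⟩))
  choose Bs hBs1 hBs2 hBs3 using key'
  set C := ⋃ n, Bs n with hC
  have hCmeas : MeasurableSet C := MeasurableSet.iUnion hBs1
  have hCS : C ⊆ S := Set.iUnion_subset hBs2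
  have hle : μ S ≤ μ C := by
    refine ENNReal.le_of_forall_pos_le_add fun ε hε hfin => ?_
    obtain ⟨n, hn⟩ := ENNReal.exists_inv_nat_lt (by exact_mod_cast hε.ne' : (ε : ℝ≥0∞) ≠ 0)
    refine (hBs3 n).trans ?_
    refine add_le_add (measure_mono (Set.subset_iUnion Bs n)) ?_
    refine le_trans ?_ hn.le
    exact ENNReal.inv_le_inv.2 (by simp)
  have hnull : μ (S \ C) = 0 := by
    have hSH : S ⊆ toMeasurable μ S := subset_toMeasurable μ S
    have h1 : S \ C ⊆ toMeasurable μ S \ C := Set.diff_subset_diff_left hSH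
    have h2 : μ (toMeasurable μ S \ C) = μ (toMeasurable μ S) - μ C :=
      measure_diff (hCS.trans hSH) hCmeas.nullMeasurableSet (measure_ne_top μ _)
    have h3 : μ (toMeasurable μ S) = μ S := measure_toMeasurable S
    have : μ (toMeasurable μ S \ C) = 0 := by
      rw [h2, h3]
      exact tsub_eq_zero_of_le hle
    exact le_antisymm (le_trans (measure_mono h1) this.le) zero_le
  have : S = C ∪ (S \ C) := (Set.union_diff_cancel hCS).symm
  rw [this]
  exact hCmeas.nullMeasurableSet.union (NullMeasurableSet.of_null hnull)

end Marczewski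
end AumannSel

namespace AumannSel
variable {T : Type*}

section Transport
variable [MeasurableSpace T] (μ : MeasureTheory.Measure T) [MeasureTheory.IsFiniteMeasure μ]

theorem nullMeasurableSet_susl_pair (A : List (ℕ × ℕ) → Set T)
    (hA : ∀ s, MeasurableSet (A s)) (hm : ∀ s k, A (s ++ [k]) ⊆ A s) :
    MeasureTheory.NullMeasurableSet (susl A) μ := by
  set d : ℕ → ℕ × ℕ := fun n => (Denumerable.eqv (ℕ × ℕ)).symm n with hd
  have heq : susl A = susl (fun l => A (l.map d)) := by
    ext t; constructor
    · rintro ⟨ρ, hρ⟩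
      refine ⟨fun n => (Denumerable.eqv (ℕ × ℕ)) (ρ n), fun n => ?_⟩
      show t ∈ A ((pre _ n).map d)
      rw [map_pre]
      have h2 : (d ∘ fun n => (Denumerable.eqv (ℕ × ℕ)) (ρ n)) = ρ :=
        funext fun n => by simp [hd]
      rw [h2]; exact hρ n
    · rintro ⟨σ, hσ⟩
      refine ⟨d ∘ σ, fun n => ?_⟩
      rw [← map_pre]; exact hσ n
  rw [heq]
  refine nullMeasurableSet_susl μ _ (fun s => hA _) (fun s k => ?_)
  show A ((s ++ [k]).map d) ⊆ A (s.map d)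
  rw [List.map_append]
  exact hm _ _

end Transport

section DD
variable [MeasurableSpace T]

/-- The set represented by a two-list Suslin scheme. -/
def PA (A : List ℕ → List ℕ → Set T) : Set (T × (ℕ → ℕ)) :=
  {p | ∃ τ : ℕ → ℕ, ∀ n, p.1 ∈ A (pre p.2 n) (pre τ n)}

structure IsScheme (A : List ℕ → List ℕ → Set T) : Prop where
  meas : ∀ s u, MeasurableSet (A s u)
  monoS : ∀ s u k, A (s ++ [k]) u ⊆ A s u
  monoU : ∀ s u j, A s (u ++ [j]) ⊆ A s u

/-- The class of subsets of `T × (ℕ → ℕ)` representable by a measurable Suslin scheme. -/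
def Dd (H : Set (T × (ℕ → ℕ))) : Prop :=
  ∃ A : List ℕ → List ℕ → Set T, IsScheme A ∧ H = PA A

lemma IsScheme.mono2 {A : List ℕ → List ℕ → Set T} (h : IsScheme A)
    {s s' u u' : List ℕ} (hs : s <+: s') (hu : u <+: u') : A s' u' ⊆ A s u := by
  obtain ⟨a, rfl⟩ := hs; obtain ⟨b, rfl⟩ := hu
  refine subset_trans (mono_append (A := fun l => A l (u ++ b))
    (fun s0 k => h.monoS s0 (u ++ b) k) s a) ?_
  exact mono_append (A := fun l => A s l) (fun u0 j => h.monoU s u0 j) u b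

lemma Dd_empty : Dd (∅ : Set (T × (ℕ → ℕ))) := by
  refine ⟨fun _ _ => ∅, ⟨fun _ _ => MeasurableSet.empty, fun _ _ _ => le_rfl,
    fun _ _ _ => le_rfl⟩, ?_⟩
  ext p
  simp only [Set.mem_empty_iff_false, PA, Set.mem_setOf_eq, false_iff]
  rintro ⟨τ, hτ⟩
  exact hτ 0

lemma Dd_univ : Dd (Set.univ : Set (T × (ℕ → ℕ))) := by
  refine ⟨fun _ _ => Set.univ, ⟨fun _ _ => MeasurableSet.univ, fun _ _ _ => le_rfl,
    fun _ _ _ => le_rfl⟩, ?_⟩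
  ext p
  simp only [Set.mem_univ, PA, Set.mem_setOf_eq, true_iff]
  exact ⟨fun _ => 0, fun _ => trivial⟩

lemma Dd_fst {A₀ : Set T} (hA₀ : MeasurableSet A₀) :
    Dd {p : T × (ℕ → ℕ) | p.1 ∈ A₀} := by
  refine ⟨fun _ _ => A₀, ⟨fun _ _ => hA₀, fun _ _ _ => le_rfl, fun _ _ _ => le_rfl⟩, ?_⟩
  ext p
  simp only [PA, Set.mem_setOf_eq]
  exact ⟨fun h => ⟨fun _ => 0, fun _ => h⟩, fun ⟨τ, hτ⟩ => hτ 0⟩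

lemma Dd_coord (i k : ℕ) : Dd {p : T × (ℕ → ℕ) | p.2 i = k} := by
  classical
  refine ⟨fun s _ => if i < s.length ∧ s.getD i 0 ≠ k then (∅ : Set T) else Set.univ,
    ⟨fun s u => ?_, fun s u c => ?_, fun s u j => le_rfl⟩, ?_⟩
  · by_cases h : i < s.length ∧ s.getD i 0 ≠ k
    · rw [if_pos h]; exact MeasurableSet.empty
    · rw [if_neg h]; exact MeasurableSet.univ
  · intro t ht
    by_cases hc : i < s.length ∧ s.getD i 0 ≠ k
    · have hc' : i < (s ++ [c]).length ∧ (s ++ [c]).getD i 0 ≠ k :=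
        ⟨by simp; omega, by rw [getD_concat_lt _ _ _ hc.1]; exact hc.2⟩
      rw [if_pos hc'] at ht
      exact absurd ht (Set.notMem_empty t)
    · rw [if_neg hc]; trivial
  · ext p
    simp only [PA, Set.mem_setOf_eq]
    constructor
    · intro hp
      refine ⟨fun _ => 0, fun n => ?_⟩
      rw [if_neg]
      · trivial
      rintro ⟨h1, h2⟩
      rw [getD_pre _ (by simpa using h1)] at h2
      exact h2 hp
    · rintro ⟨τ, hτ⟩
      by_contra hne
      have h2 := hτ (i + 1)
      rw [if_pos ⟨by simp, by rw [getD_pre _ (Nat.lt_succ_self i)]; exact hne⟩] at h2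
      exact h2

lemma Dd_iUnion (H : ℕ → Set (T × (ℕ → ℕ))) (h : ∀ i, Dd (H i)) : Dd (⋃ i, H i) := by
  classical
  choose A hA hHA using h
  refine ⟨fun s u => if u = [] then Set.univ else A u.headI s.dropLast u.tail,
    ⟨fun s u => ?_, fun s u c => ?_, fun s u c => ?_⟩, ?_⟩
  · by_cases h : u = [] <;> simp [h, (hA _).meas]
  · -- monoS
    by_cases h : u = []
    · subst h; simp
    · rw [if_neg h, if_neg h, List.dropLast_concat]
      exact (hA u.headI).mono2 (List.dropLast_prefix s) (List.prefix_refl _)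
  · -- monoU
    rcases u with _ | ⟨j, u'⟩
    · simp
    · rw [if_neg (by simp), if_neg (by simp)]
      show A (((j :: u') ++ [c]).headI) _ (((j :: u') ++ [c]).tail) ⊆ _
      simp only [List.cons_append, List.headI_cons, List.tail_cons]
      exact (hA j).mono2 (List.prefix_refl _) ⟨[c], rfl⟩
  · ext p
    simp only [Set.mem_iUnion, PA, Set.mem_setOf_eq]
    constructor
    · rintro ⟨i, hp⟩
      rw [hHA i] at hp
      obtain ⟨τ, hτ⟩ := hp
      refine ⟨fun n => Nat.casesOn n i (fun m => τ m), fun n => ?_⟩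
      cases n with
      | zero => simp
      | succ n =>
        rw [pre_cons, if_neg (by simp)]
        simp only [List.headI_cons, List.tail_cons]
        rw [pre_succ, List.dropLast_concat]
        have h3 : pre (fun k => Nat.casesOn (k + 1) i (fun m => τ m) : ℕ → ℕ) n = pre τ n :=
          pre_congr fun j _ => rfl
        rw [h3]
        exact hτ n
    · rintro ⟨τ, hτ⟩
      refine ⟨τ 0, ?_⟩
      rw [hHA (τ 0)]
      refine ⟨fun m => τ (m + 1), fun n => ?_⟩
      have h2 := hτ (n + 1)
      rw [pre_cons τ n, if_neg (by simp)] at h2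
      simp only [List.headI_cons, List.tail_cons] at h2
      rwa [pre_succ, List.dropLast_concat] at h2

end DD

end AumannSel

namespace AumannSel
variable {T : Type*}

/-- number of `j` with `Nat.pair i j < n` -/
def mm (i n : ℕ) : ℕ := ((Finset.range n).filter fun j => Nat.pair i j < n).card

lemma pair_strictMono (i : ℕ) : StrictMono (Nat.pair i) := fun _ _ h =>
  Nat.pair_lt_pair_right i h

lemma lt_mm_iff {i n j : ℕ} : j < mm i n ↔ Nat.pair i j < n := by
  constructor
  · intro h
    by_contra hc
    push_neg at hc
    have hsub : ((Finset.range n).filter fun a => Nat.pair i a < n) ⊆ Finset.range j := by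
      intro a ha
      simp only [Finset.mem_filter, Finset.mem_range] at ha ⊢
      exact (pair_strictMono i).lt_iff_lt.mp (lt_of_lt_of_le ha.2 hc)
    have := Finset.card_le_card hsub
    rw [Finset.card_range] at this
    exact absurd h (by unfold mm; omega)
  · intro h
    have hsub : Finset.range (j + 1) ⊆ (Finset.range n).filter fun a => Nat.pair i a < n := by
      intro a ha
      simp only [Finset.mem_range] at ha
      have h1 : Nat.pair i a ≤ Nat.pair i j := (pair_strictMono i).monotone (by omega)
      simp only [Finset.mem_filter, Finset.mem_range]
      have h2 := Nat.right_le_pair i a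
      omega
    have := Finset.card_le_card hsub
    rw [Finset.card_range] at this
    unfold mm
    omega

lemma mm_le (i n : ℕ) : mm i n ≤ n :=
  le_trans (Finset.card_filter_le _ _) (le_of_eq (Finset.card_range n))

lemma mm_mono (i : ℕ) {n n' : ℕ} (h : n ≤ n') : mm i n ≤ mm i n' := by
  by_contra hc
  push_neg at hc
  have h1 : mm i n' < mm i n := hc
  have h2 : Nat.pair i (mm i n') < n := lt_mm_iff.mp h1
  have h3 : mm i n' < mm i n' := lt_mm_iff.mpr (by omega)
  omega

/-- extraction of the `i`-th subsequence encoded in `u` -/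
def extract (i : ℕ) (u : List ℕ) : List ℕ :=
  pre (fun j => u.getD (Nat.pair i j) 0) (mm i u.length)

lemma extract_pre (i : ℕ) (τ : ℕ → ℕ) (n : ℕ) :
    extract i (pre τ n) = pre (fun j => τ (Nat.pair i j)) (mm i n) := by
  unfold extract
  rw [length_pre]
  exact pre_congr fun j hj => getD_pre _ (lt_mm_iff.mp hj) 0

lemma extract_concat_prefix (i : ℕ) (u : List ℕ) (c : ℕ) :
    extract i u <+: extract i (u ++ [c]) := by
  have hlen : (u ++ [c]).length = u.length + 1 := by simp
  have hle : mm i u.length ≤ mm i (u.length + 1) := mm_mono i (by omega)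
  have heq : extract i u = (extract i (u ++ [c])).take (mm i u.length) := by
    unfold extract
    rw [hlen, take_pre _ hle]
    refine pre_congr fun j hj => ?_
    have hp : Nat.pair i j < u.length := lt_mm_iff.mp hj
    rw [getD_concat_lt _ _ _ hp]
  rw [heq]
  exact List.take_prefix _ _

lemma take_prefix_take {ι : Type*} (l : List ι) {q q' : ℕ} (h : q ≤ q') :
    l.take q <+: l.take q' := by
  have : l.take q = (l.take q').take q := by rw [List.take_take, Nat.min_eq_left h]
  rw [this]
  exact List.take_prefix _ _

lemma take_concat_prefix {ι : Type*} (l : List ι) (c : ι) (q : ℕ) :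
    l.take q <+: (l ++ [c]).take q := by
  rcases le_or_gt q l.length with h | h
  · rw [List.take_append_of_le_length h]
  · rw [List.take_of_length_le h.le, List.take_of_length_le (by simp; omega)]
    exact ⟨[c], rfl⟩

section DD2
variable [MeasurableSpace T]

lemma Dd_iInter (H : ℕ → Set (T × (ℕ → ℕ))) (h : ∀ i, Dd (H i)) : Dd (⋂ i, H i) := by
  choose A hA hHA using h
  refine ⟨fun s u => ⋂ i, A i (s.take (mm i u.length)) (extract i u),
    ⟨fun s u => MeasurableSet.iInter fun i => (hA i).meas _ _,
     fun s u c => ?_, fun s u c => ?_⟩, ?_⟩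
  · -- monoS
    refine Set.iInter_mono fun i => ?_
    exact (hA i).mono2 (take_concat_prefix s c _) (List.prefix_refl _)
  · -- monoU
    refine Set.iInter_mono fun i => ?_
    have hlen : (u ++ [c]).length = u.length + 1 := by simp
    rw [hlen]
    exact (hA i).mono2 (take_prefix_take s (mm_mono i (by omega)))
      (extract_concat_prefix i u c)
  · ext p
    simp only [Set.mem_iInter, PA, Set.mem_setOf_eq]
    constructor
    · intro hp
      have hp' : ∀ i, ∃ τ : ℕ → ℕ, ∀ n, p.1 ∈ A i (pre p.2 n) (pre τ n) := by
        intro i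
        have := hp i
        rwa [hHA i] at this
      choose τs hτs using hp'
      refine ⟨fun k => τs (Nat.unpair k).1 (Nat.unpair k).2, fun n => ?_⟩
      intro i
      have h1 : (pre p.2 n).take (mm i (pre (fun k => τs (Nat.unpair k).1 (Nat.unpair k).2) n).length)
          = pre p.2 (mm i n) := by
        rw [length_pre, take_pre _ (mm_le i n)]
      rw [h1, extract_pre]
      have h2 : pre (fun j => τs (Nat.unpair (Nat.pair i j)).1 (Nat.unpair (Nat.pair i j)).2)
          (mm i n) = pre (τs i) (mm i n) :=
        pre_congr fun j _ => by rw [Nat.unpair_pair]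
      rw [h2]
      exact hτs i (mm i n)
    · rintro ⟨τ, hτ⟩ i
      rw [hHA i]
      refine ⟨fun j => τ (Nat.pair i j), fun q => ?_⟩
      set n := Nat.pair i q + 1 with hn
      have hq : q < mm i n := lt_mm_iff.mpr (by omega)
      have h3 := hτ n i
      rw [length_pre, take_pre _ (mm_le i n), extract_pre] at h3
      exact (hA i).mono2
        (by rw [← take_pre p.2 hq.le]; exact List.take_prefix _ _)
        (by rw [← take_pre (fun j => τ (Nat.pair i j)) hq.le]; exact List.take_prefix _ _) h3

end DD2
end AumannSel

namespace AumannSel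
variable {T : Type*} [MeasurableSpace T]

lemma Dd_compl_coord (i k : ℕ) : Dd {p : T × (ℕ → ℕ) | p.2 i ≠ k} := by
  classical
  have h : {p : T × (ℕ → ℕ) | p.2 i ≠ k} =
      ⋃ k', if k' = k then (∅ : Set (T × (ℕ → ℕ))) else {p : T × (ℕ → ℕ) | p.2 i = k'} := by
    ext p
    simp only [Set.mem_setOf_eq, Set.mem_iUnion]
    constructor
    · intro hne
      exact ⟨p.2 i, by rw [if_neg hne]; exact rfl⟩
    · rintro ⟨k', hk'⟩
      by_cases hkk : k' = k
      · rw [if_pos hkk] at hk'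
        exact absurd hk' (Set.notMem_empty p)
      · rw [if_neg hkk] at hk'
        have : p.2 i = k' := hk'
        omega
  rw [h]
  refine Dd_iUnion _ fun k' => ?_
  by_cases hkk : k' = k
  · rw [if_pos hkk]; exact Dd_empty
  · rw [if_neg hkk]; exact Dd_coord i k'

theorem Dd_of_measurableSet {H : Set (T × (ℕ → ℕ))} (hH : MeasurableSet H) : Dd H := by
  let m' : MeasurableSpace (T × (ℕ → ℕ)) :=
    { MeasurableSet' := fun H => Dd H ∧ Dd Hᶜ
      measurableSet_empty := ⟨Dd_empty, by rw [Set.compl_empty]; exact Dd_univ⟩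
      measurableSet_compl := fun s hs => ⟨hs.2, by rw [compl_compl]; exact hs.1⟩
      measurableSet_iUnion := fun f hf => ⟨Dd_iUnion f fun i => (hf i).1,
        by rw [Set.compl_iUnion]; exact Dd_iInter _ fun i => (hf i).2⟩ }
  have hfst : @Measurable _ _ m' _ (Prod.fst : T × (ℕ → ℕ) → T) := by
    intro A hA
    refine ⟨Dd_fst hA, ?_⟩
    have h2 : (Prod.fst ⁻¹' A : Set (T × (ℕ → ℕ)))ᶜ = {p | p.1 ∈ Aᶜ} := rfl
    rw [h2]
    exact Dd_fst hA.compl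
  have hsnd : @Measurable _ _ m' _ (Prod.snd : T × (ℕ → ℕ) → (ℕ → ℕ)) := by
    rw [measurable_pi_iff]
    intro i
    apply measurable_to_countable'
    intro k
    have h3 : ((fun p : T × (ℕ → ℕ) => p.2 i) ⁻¹' {k}) = {p : T × (ℕ → ℕ) | p.2 i = k} := by
      ext p; simp
    have h4 : ((fun p : T × (ℕ → ℕ) => p.2 i) ⁻¹' {k})ᶜ = {p : T × (ℕ → ℕ) | p.2 i ≠ k} := by
      ext p; simp
    exact (⟨h3 ▸ Dd_coord i k, h4 ▸ Dd_compl_coord i k⟩ :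
      MeasurableSpace.MeasurableSet' m' _)
  have hid : @Measurable (T × (ℕ → ℕ)) (T × (ℕ → ℕ)) m' Prod.instMeasurableSpace
      (fun p : T × (ℕ → ℕ) => p) := Measurable.prod hfst hsnd
  exact (hid hH).1

end AumannSel

namespace AumannSel
variable {T : Type*} [MeasurableSpace T]

theorem exists_measurable_selector (μ : MeasureTheory.Measure T)
    [MeasureTheory.IsFiniteMeasure μ] (hμ : μ.IsComplete)
    {H : Set (T × (ℕ → ℕ))} (hH : MeasurableSet H)
    (hne : ∀ t, ∃ σ : ℕ → ℕ, (t, σ) ∈ H) :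
    ∃ f : T → (ℕ → ℕ), Measurable f ∧ ∀ t, (t, f t) ∈ H := by
  classical
  haveI := hμ
  obtain ⟨A, hA, hHA⟩ := Dd_of_measurableSet hH
  -- merged scheme over ℕ × ℕ
  set B : List (ℕ × ℕ) → Set T :=
    fun l => A (l.map Prod.fst) (l.map Prod.snd) with hBdef
  have hBmeas : ∀ l, MeasurableSet (B l) := fun l => hA.meas _ _
  have hBmono : ∀ l c, B (l ++ [c]) ⊆ B l := by
    intro l c
    show A ((l ++ [c]).map Prod.fst) ((l ++ [c]).map Prod.snd) ⊆ _
    rw [List.map_append, List.map_append]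
    exact subset_trans (hA.monoS _ _ _) (hA.monoU _ _ _)
  have hBpre : ∀ {l l' : List (ℕ × ℕ)}, l <+: l' → B l' ⊆ B l :=
    fun h => mono_prefix (fun l c => hBmono l c) h
  -- the projection-tree sets
  set TT : List (ℕ × ℕ) → Set T :=
    fun l => {t | ∃ ρ : ℕ → ℕ × ℕ, pre ρ l.length = l ∧ ∀ n, t ∈ B (pre ρ n)} with hTTdef
  have hTT_susl : ∀ l, TT l = susl (fun l' => B (l ++ l')) := by
    intro l
    ext t; constructor
    · rintro ⟨ρ, hρl, hρ⟩
      refine ⟨fun k => ρ (l.length + k), fun n => ?_⟩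
      have h1 : l ++ pre (fun k => ρ (l.length + k)) n = pre ρ (l.length + n) := by
        rw [pre_add, hρl]
      show t ∈ B (l ++ _)
      rw [h1]
      exact hρ _
    · rintro ⟨σ, hσ⟩
      set ρ : ℕ → ℕ × ℕ :=
        fun k => if k < l.length then l.getD k (0, 0) else σ (k - l.length) with hρdef
      have hρl : pre ρ l.length = l := pre_eq_self ρ l (0, 0) (fun k hk => if_pos hk)
      have htl : t ∈ B l := by
        have h0 := hσ 0
        simp only [pre_zero, List.append_nil] at h0
        exact h0
      refine ⟨ρ, hρl, fun n => ?_⟩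
      rcases le_or_gt n l.length with h | h
      · have h2 : pre ρ n = l.take n := by
          rw [← hρl, take_pre _ h]
        rw [h2]
        exact hBpre (List.take_prefix _ _) htl
      · have h3 : n = l.length + (n - l.length) := by omega
        rw [h3, pre_add, hρl]
        have h4 : pre (fun k => ρ (l.length + k)) (n - l.length) = pre σ (n - l.length) :=
          pre_congr fun k _ => by
            simp only [hρdef]
            rw [if_neg (by omega)]
            congr 1
            omega
        rw [h4]
        exact hσ _
  have hTTmeas : ∀ l, MeasurableSet (TT l) := by
    intro l
    rw [hTT_susl l]
    refine (nullMeasurableSet_susl_pair μ _ (fun s => hBmeas _) ?_).measurable_of_complete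
    intro s k
    rw [← List.append_assoc]
    exact hBmono _ _
  have hTT0 : ∀ t, t ∈ TT [] := by
    intro t
    obtain ⟨σ, hσ⟩ := hne t
    rw [hHA] at hσ
    obtain ⟨τ, hτ⟩ := hσ
    refine ⟨fun k => (σ k, τ k), rfl, fun n => ?_⟩
    show t ∈ A ((pre _ n).map Prod.fst) ((pre _ n).map Prod.snd)
    rw [map_pre, map_pre]
    exact hτ n
  have hTTstep : ∀ l t, t ∈ TT l → ∃ c, t ∈ TT (l ++ [c]) := by
    rintro l t ⟨ρ, hρl, hρ⟩
    refine ⟨ρ l.length, ρ, ?_, hρ⟩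
    rw [List.length_append, List.length_singleton, pre_succ, hρl]
  have hTTB : ∀ l t, t ∈ TT l → t ∈ B l := by
    rintro l t ⟨ρ, hρl, hρ⟩
    have := hρ l.length
    rwa [hρl] at this
  -- enumeration of ℕ × ℕ
  set d : ℕ → ℕ × ℕ := fun n => (Denumerable.eqv (ℕ × ℕ)).symm n with hd
  have hdinj : Function.Injective d := (Denumerable.eqv (ℕ × ℕ)).symm.injective
  have hdv : ∀ v : ℕ × ℕ, d ((Denumerable.eqv (ℕ × ℕ)) v) = v := fun v => by simp [hd]
  have hex : ∀ l t, t ∈ TT l → ∃ n, t ∈ TT (l ++ [d n]) := by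
    intro l t ht
    obtain ⟨c, hc⟩ := hTTstep l t ht
    exact ⟨(Denumerable.eqv (ℕ × ℕ)) c, by rwa [hdv c]⟩
  -- the recursive selector
  set ch : List (ℕ × ℕ) → T → ℕ × ℕ := fun l t =>
    if h : ∃ n, t ∈ TT (l ++ [d n]) then d (Nat.find h) else (0, 0) with hch
  set r : T → ℕ → List (ℕ × ℕ) :=
    fun t n => Nat.rec [] (fun _ l => l ++ [ch l t]) n with hr
  have hr_succ : ∀ t n, r t (n + 1) = r t n ++ [ch (r t n) t] := fun t n => rfl
  have hr_len : ∀ t n, (r t n).length = n := by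
    intro t n; induction n with
    | zero => rfl
    | succ n ih => rw [hr_succ]; simp [ih]
  have hr_mem : ∀ t n, t ∈ TT (r t n) := by
    intro t n; induction n with
    | zero => exact hTT0 t
    | succ n ih =>
      have h := hex (r t n) t ih
      have hc : ch (r t n) t = d (Nat.find h) := dif_pos h
      rw [hr_succ, hc]
      exact Nat.find_spec h
  set ρsel : T → ℕ → ℕ × ℕ := fun t n => (r t (n + 1)).getD n (0, 0) with hρsel
  have hpre_r : ∀ t n, pre (ρsel t) n = r t n := by
    intro t n; induction n with
    | zero => rfl
    | succ n ih =>
      rw [pre_succ, ih, hr_succ]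
      congr 1
      have h6 : ρsel t n = (r t n ++ [ch (r t n) t]).getD n (0, 0) := rfl
      have h7 := getD_concat_len (r t n) (ch (r t n) t) (0, 0)
      rw [hr_len t n] at h7
      rw [h6, h7]
  set f : T → ℕ → ℕ := fun t k => (ρsel t k).1 with hf
  have hmem : ∀ t, (t, f t) ∈ H := by
    intro t
    rw [hHA]
    refine ⟨fun k => (ρsel t k).2, fun n => ?_⟩
    have h8 := hTTB _ _ (hr_mem t n)
    rw [← hpre_r t n] at h8
    have h9 : t ∈ A ((pre (ρsel t) n).map Prod.fst) ((pre (ρsel t) n).map Prod.snd) := h8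
    rwa [map_pre, map_pre] at h9
  -- measurability
  have hcmeas : ∀ (l : List (ℕ × ℕ)) (v : ℕ × ℕ), MeasurableSet {t | ch l t = v} := by
    intro l v
    set n₀ := (Denumerable.eqv (ℕ × ℕ)) v with hn₀
    have heq : {t | ch l t = v} =
        (TT (l ++ [d n₀]) ∩ ⋂ (m) (_ : m < n₀), (TT (l ++ [d m]))ᶜ) ∪
          (if v = (0, 0) then ⋂ n, (TT (l ++ [d n]))ᶜ else ∅) := by
      ext t
      by_cases hS : ∃ n, t ∈ TT (l ++ [d n])
      · simp only [Set.mem_setOf_eq, hch, dif_pos hS, Set.mem_union, Set.mem_inter_iff,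
          Set.mem_iInter, Set.mem_compl_iff]
        constructor
        · intro hv
          have hfind : Nat.find hS = n₀ := by
            apply hdinj
            rw [hv, hn₀, hdv]
          refine Or.inl ⟨?_, ?_⟩
          · rw [← hfind]; exact Nat.find_spec hS
          · intro m hm
            rw [← hfind] at hm
            exact Nat.find_min hS hm
        · rintro (⟨h1, h2⟩ | h3)
          · have hfind : Nat.find hS = n₀ := by
              rw [Nat.find_eq_iff]
              exact ⟨h1, fun m hm => h2 m hm⟩
            rw [hfind, hn₀, hdv]
          · exfalso
            rcases eq_or_ne v (0, 0) with hv0 | hv0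
            · rw [if_pos hv0] at h3
              obtain ⟨n, hn⟩ := hS
              exact (Set.mem_iInter.1 h3 n) hn
            · rw [if_neg hv0] at h3
              exact h3
      · simp only [Set.mem_setOf_eq, hch, dif_neg hS, Set.mem_union, Set.mem_inter_iff,
          Set.mem_iInter, Set.mem_compl_iff]
        constructor
        · intro hv
          refine Or.inr ?_
          rw [if_pos hv.symm]
          exact Set.mem_iInter.2 fun n hn => hS ⟨n, hn⟩
        · rintro (⟨h1, _⟩ | h3)
          · exact absurd ⟨n₀, h1⟩ hS
          · rcases eq_or_ne v (0, 0) with hv0 | hv0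
            · exact hv0.symm
            · rw [if_neg hv0] at h3
              exact absurd h3 (Set.notMem_empty t)
    rw [heq]
    refine MeasurableSet.union ((hTTmeas _).inter ?_) ?_
    · exact MeasurableSet.iInter fun m => MeasurableSet.iInter fun _ => (hTTmeas _).compl
    · rcases eq_or_ne v (0, 0) with hv0 | hv0
      · rw [if_pos hv0]
        exact MeasurableSet.iInter fun n => (hTTmeas _).compl
      · rw [if_neg hv0]
        exact MeasurableSet.empty
  have hrmeas : ∀ (n : ℕ) (l : List (ℕ × ℕ)), MeasurableSet {t | r t n = l} := by
    intro n
    induction n with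
    | zero =>
      intro l
      rcases eq_or_ne l [] with rfl | hl
      · have : {t : T | r t 0 = []} = Set.univ := by
          ext t
          simp only [Set.mem_univ, iff_true, Set.mem_setOf_eq]
          rfl
        rw [this]; exact MeasurableSet.univ
      · have : {t : T | r t 0 = l} = ∅ := by
          ext t
          simp only [Set.mem_empty_iff_false, iff_false, Set.mem_setOf_eq]
          intro h
          exact hl (by rw [← h]; rfl)
        rw [this]; exact MeasurableSet.empty
    | succ n ih =>
      intro l
      induction l using List.reverseRecOn with
      | nil =>
        have : {t : T | r t (n + 1) = []} = ∅ := by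
          ext t
          simp only [Set.mem_empty_iff_false, iff_false, Set.mem_setOf_eq, hr_succ]
          intro h
          exact absurd (congrArg List.length h) (by simp)
        rw [this]; exact MeasurableSet.empty
      | append_singleton l' c' _ =>
        have heq : {t : T | r t (n + 1) = l' ++ [c']} =
            {t | r t n = l'} ∩ {t | ch l' t = c'} := by
          ext t
          simp only [Set.mem_inter_iff, Set.mem_setOf_eq, hr_succ]
          constructor
          · intro h
            have h1 : r t n = l' := by
              have := congrArg List.dropLast h
              rwa [List.dropLast_concat, List.dropLast_concat] at this
            refine ⟨h1, ?_⟩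
            rw [h1] at h
            have h2 := List.append_cancel_left h
            simpa using h2
          · rintro ⟨h1, h2⟩
            rw [h1, h2]
        rw [heq]
        exact (ih l').inter (hcmeas l' c')
  refine ⟨f, ?_, hmem⟩
  rw [measurable_pi_iff]
  intro k
  apply measurable_to_countable'
  intro y
  have heq : (fun t => f t k) ⁻¹' {y} =
      ⋃ (l : List (ℕ × ℕ)) (_ : (l.getD k (0, 0)).1 = y), {t | r t (k + 1) = l} := by
    ext t
    simp only [Set.mem_preimage, Set.mem_singleton_iff, Set.mem_iUnion, Set.mem_setOf_eq, hf,
      hρsel]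
    constructor
    · intro h
      exact ⟨r t (k + 1), h, rfl⟩
    · rintro ⟨l, hl, hrl⟩
      rw [hrl]
      exact hl
  rw [heq]
  exact MeasurableSet.iUnion fun l => MeasurableSet.iUnion fun _ => hrmeas (k + 1) l

end AumannSel

/-- An integrably bounded multifunction with (nonempty values and)
measurable graph into a separable Banach space admits a Bochner integrable selector;
hence its Bochner integral is nonempty. -/
theorem integrable_selector_exists
    {T : Type*} [MeasurableSpace T] (μ : Measure T) [IsFiniteMeasure μ]
    (hμ : μ.IsComplete)
    {E : Type*} [NormedAddCommGroup E] [NormedSpace ℝ E] [CompleteSpace E]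
    [TopologicalSpace.SeparableSpace E] [MeasurableSpace E] [BorelSpace E]
    (Γ : T → Set E)
    (hne : ∀ t, (Γ t).Nonempty)
    (hgraph : MeasurableSet {p : T × E | p.2 ∈ Γ p.1})
    (ψ : T → ℝ) (hψ : Integrable ψ μ)
    (hbound : ∀ᵐ t ∂μ, ∀ x ∈ Γ t, ‖x‖ < ψ t) :
    (∃ f : T → E, Integrable f μ ∧ ∀ᵐ t ∂μ, f t ∈ Γ t) ∧
      {y : E | ∃ f : T → E, Integrable f μ ∧ (∀ᵐ t ∂μ, f t ∈ Γ t) ∧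
        y = ∫ t, f t ∂μ}.Nonempty := by
  classical
  suffices hsel : ∃ f : T → E, Integrable f μ ∧ ∀ᵐ t ∂μ, f t ∈ Γ t by
    obtain ⟨f, h1, h2⟩ := hsel
    exact ⟨⟨f, h1, h2⟩, ⟨∫ t, f t ∂μ, f, h1, h2, rfl⟩⟩
  rcases isEmpty_or_nonempty T with hT | hT
  · refine ⟨fun t => (hne t).some, ?_, ?_⟩
    · have h0 : μ = 0 := Measure.eq_zero_of_isEmpty μ
      rw [h0]
      exact integrable_zero_measure
    · exact Filter.Eventually.of_forall fun t => (hne t).some_mem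
  haveI : Nonempty E := ⟨(hne (Classical.arbitrary T)).some⟩
  obtain ⟨hh, hhc, hhs⟩ := PolishSpace.exists_nat_nat_continuous_surjective E
  set H : Set (T × (ℕ → ℕ)) :=
    (fun p : T × (ℕ → ℕ) => (p.1, hh p.2)) ⁻¹' {p : T × E | p.2 ∈ Γ p.1} with hHdef
  have hHmeas : MeasurableSet H :=
    (measurable_fst.prodMk (hhc.measurable.comp measurable_snd)) hgraph
  have hHne : ∀ t, ∃ σ : ℕ → ℕ, (t, σ) ∈ H := by
    intro t
    obtain ⟨x, hx⟩ := hne t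
    obtain ⟨σ, hσ⟩ := hhs x
    exact ⟨σ, show hh σ ∈ Γ t by rw [hσ]; exact hx⟩
  obtain ⟨f₀, hf₀m, hf₀⟩ := AumannSel.exists_measurable_selector μ hμ hHmeas hHne
  set f : T → E := fun t => hh (f₀ t) with hfdef
  have hfm : Measurable f := hhc.measurable.comp hf₀m
  have hmemf : ∀ t, f t ∈ Γ t := fun t => hf₀ t
  refine ⟨f, ?_, Filter.Eventually.of_forall hmemf⟩
  refine Integrable.mono' hψ hfm.aestronglyMeasurable ?_
  filter_upwards [hbound] with t ht
  exact (ht (f t) (hmemf t)).le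
end
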